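/- For 0 < a < 1, the positive Lyapunov exponent of the anti-symmetric cusp map equals λ₊⁽ᵃ⁾ = ∫₀^{1/2} log f₀ᵃ'(x) dx + ∫_{1/2}¹ log f₁ᵃ'(x) dx = log 2 + 1/2 + ((1-a)²/(4a))·log(1-a) − ((1+a)²/(4a))·log(1+a); moreover, for a = 1 the same integral equals 1/2. -/

import Mathlib

open Set MeasureTheory

/-- Left branch of the anti-symmetric cusp map:
`f₀ᵃ(x) = ((a+1)/(2a))·(1 - √(1 - 8ax/(a+1)²))` on `[0,1/2]`. -/
noncomputable def f0a (a x : ℝ) : ℝ :=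
  ((a + 1) / (2 * a)) * (1 - Real.sqrt (1 - 8 * a * x / (a + 1) ^ 2))

/-- Right branch of the anti-symmetric cusp map: `f₁ᵃ(x) = 1 - f₀ᵃ(1-x)` on `[1/2,1]`. -/
noncomputable def f1a (a x : ℝ) : ℝ := 1 - f0a a (1 - x)

/-- Inverse of the left branch: `g₀ᵃ(x) = ((1+a)/2)x - (a/2)x²`. -/
noncomputable def g0a (a x : ℝ) : ℝ := ((1 + a) / 2) * x - (a / 2) * x ^ 2

/-- Inverse of the right branch: `g₁ᵃ(x) = 1/2 + ((1-a)/2)x + (a/2)x²`. -/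
noncomputable def g1a (a x : ℝ) : ℝ := 1 / 2 + ((1 - a) / 2) * x + (a / 2) * x ^ 2

namespace CuspAux

/-- Derivative of the left branch where the square root argument is positive. -/
lemma hasDerivAt_f0a (a x : ℝ) (ha : 0 < a) (hu : 0 < 1 - 8 * a * x / (a + 1) ^ 2) :
    HasDerivAt (f0a a)
      (2 / ((a + 1) * Real.sqrt (1 - 8 * a * x / (a + 1) ^ 2))) x := by
  have ha1 : (0:ℝ) < a + 1 := by linarith
  set u : ℝ := 1 - 8 * a * x / (a + 1) ^ 2 with hu_def
  have hs : 0 < Real.sqrt u := Real.sqrt_pos.2 hu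
  have h1 : HasDerivAt (fun y : ℝ => 1 - 8 * a * y / (a + 1) ^ 2)
      (-(8 * a / (a + 1) ^ 2)) x := by
    have h : HasDerivAt (fun y : ℝ => 8 * a * y / (a + 1) ^ 2)
        (8 * a / (a + 1) ^ 2) x := by
      simpa [mul_comm, mul_div_assoc] using
        (((hasDerivAt_id x).const_mul (8 * a)).div_const ((a + 1) ^ 2))
    simpa using h.const_sub 1
  have h2 : HasDerivAt (fun y : ℝ => Real.sqrt (1 - 8 * a * y / (a + 1) ^ 2))
      ((1 / (2 * Real.sqrt u)) * (-(8 * a / (a + 1) ^ 2))) x :=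
    (Real.hasDerivAt_sqrt hu.ne').comp x h1
  have h3 := (h2.const_sub 1).const_mul ((a + 1) / (2 * a))
  have : HasDerivAt (f0a a)
      ((a + 1) / (2 * a) * -((1 / (2 * Real.sqrt u)) * (-(8 * a / (a + 1) ^ 2)))) x := by
    exact h3
  convert this using 1
  field_simp
  ring

lemma log_deriv_f0a (a x : ℝ) (ha : 0 < a) (hu : 0 < 1 - 8 * a * x / (a + 1) ^ 2) :
    Real.log (deriv (f0a a) x)
      = Real.log 2 - Real.log (a + 1)
        - (1 / 2) * Real.log (1 - 8 * a * x / (a + 1) ^ 2) := by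
  have ha1 : (0:ℝ) < a + 1 := by linarith
  have hs : 0 < Real.sqrt (1 - 8 * a * x / (a + 1) ^ 2) := Real.sqrt_pos.2 hu
  rw [(hasDerivAt_f0a a x ha hu).deriv]
  rw [Real.log_div two_ne_zero (by positivity), Real.log_mul ha1.ne' hs.ne',
    Real.log_sqrt hu.le]
  ring

/-- Derivative of the right branch. -/
lemma hasDerivAt_f1a (a x : ℝ) (ha : 0 < a)
    (hu : 0 < 1 - 8 * a * (1 - x) / (a + 1) ^ 2) :
    HasDerivAt (f1a a)
      (2 / ((a + 1) * Real.sqrt (1 - 8 * a * (1 - x) / (a + 1) ^ 2))) x := by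
  have h1 : HasDerivAt (fun y : ℝ => 1 - y) (-1) x := by
    simpa using (hasDerivAt_id x).const_sub 1
  have h2 := ((hasDerivAt_f0a a (1 - x) ha hu).comp x h1).const_sub 1
  have : HasDerivAt (f1a a)
      (-(2 / ((a + 1) * Real.sqrt (1 - 8 * a * (1 - x) / (a + 1) ^ 2)) * (-1))) x := h2
  simpa using this

lemma log_deriv_f1a (a x : ℝ) (ha : 0 < a)
    (hu : 0 < 1 - 8 * a * (1 - x) / (a + 1) ^ 2) :
    Real.log (deriv (f1a a) x)
      = Real.log 2 - Real.log (a + 1)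
        - (1 / 2) * Real.log (1 - 8 * a * (1 - x) / (a + 1) ^ 2) := by
  have ha1 : (0:ℝ) < a + 1 := by linarith
  have hs : 0 < Real.sqrt (1 - 8 * a * (1 - x) / (a + 1) ^ 2) := Real.sqrt_pos.2 hu
  rw [(hasDerivAt_f1a a x ha hu).deriv]
  rw [Real.log_div two_ne_zero (by positivity), Real.log_mul ha1.ne' hs.ne',
    Real.log_sqrt hu.le]
  ring

/-- `log` is interval integrable on `[t,1]` for `0 ≤ t ≤ 1`, including `t = 0`. -/
lemma intervalIntegrable_log01 (t : ℝ) (ht : 0 ≤ t) (ht1 : t ≤ 1) :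
    IntervalIntegrable Real.log volume t 1 := by
  have hderiv : ∀ y ∈ Ioo (0:ℝ) 1,
      HasDerivAt (fun y : ℝ => y - y * Real.log y) (-Real.log y) y := by
    intro y hy
    have h : HasDerivAt (fun y : ℝ => y - y * Real.log y) (1 - (1 * Real.log y + y * y⁻¹)) y :=
      (hasDerivAt_id y).sub ((hasDerivAt_id y).mul (Real.hasDerivAt_log hy.1.ne'))
    convert h using 1
    field_simp [hy.1.ne']
    ring
  have hcont : ContinuousOn (fun y : ℝ => y - y * Real.log y) (Icc 0 1) :=
    (continuous_id.sub Real.continuous_mul_log).continuousOn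
  have hpos : ∀ y ∈ Ioo (0:ℝ) 1, 0 ≤ -Real.log y := fun y hy =>
    neg_nonneg.2 (Real.log_nonpos hy.1.le hy.2.le)
  have hint : IntegrableOn (fun y : ℝ => -Real.log y) (Ioc 0 1) :=
    intervalIntegral.integrableOn_deriv_of_nonneg hcont hderiv hpos
  have hint' : IntegrableOn Real.log (Ioc 0 1) := by
    exact integrable_neg_iff.mp hint
  rw [intervalIntegrable_iff_integrableOn_Ioc_of_le ht1]
  exact hint'.mono_set (Ioc_subset_Ioc ht le_rfl)

/-- `∫ y in t..1, log y = -1 + t - t log t` for `0 ≤ t ≤ 1`, including `t = 0`. -/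
lemma integral_log_t1 (t : ℝ) (ht : 0 ≤ t) (ht1 : t ≤ 1) :
    ∫ y in t..(1:ℝ), Real.log y = -1 + t - t * Real.log t := by
  have hcont : ContinuousOn (fun y : ℝ => y * Real.log y - y) (Icc t 1) :=
    (Real.continuous_mul_log.sub continuous_id).continuousOn
  have hderiv : ∀ y ∈ Ioo t (1:ℝ),
      HasDerivWithinAt (fun y : ℝ => y * Real.log y - y) (Real.log y) (Ioi y) y := by
    intro y hy
    have hy0 : 0 < y := lt_of_le_of_lt ht hy.1
    have h : HasDerivAt (fun y : ℝ => y * Real.log y - y) (1 * Real.log y + y * y⁻¹ - 1) y :=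
      ((hasDerivAt_id y).mul (Real.hasDerivAt_log hy0.ne')).sub (hasDerivAt_id y)
    have h' : HasDerivAt (fun y : ℝ => y * Real.log y - y) (Real.log y) y := by
      convert h using 1
      field_simp [hy0.ne']
      ring
    exact h'.hasDerivWithinAt
  have := intervalIntegral.integral_eq_sub_of_hasDeriv_right_of_le ht1 hcont hderiv
    (intervalIntegrable_log01 t ht ht1)
  rw [this]
  simp [Real.log_one]
  ring

lemma upos (a x : ℝ) (ha : 0 < a) (ha1 : a ≤ 1) (hx0 : 0 ≤ x) (hx : x < 1 / 2) :
    0 < 1 - 8 * a * x / (a + 1) ^ 2 := by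
  have ha1' : (0:ℝ) < (a + 1) ^ 2 := by positivity
  rw [sub_pos, div_lt_one ha1']
  nlinarith [sq_nonneg (a - 1)]

/-- Core computation for `0 < a ≤ 1`. -/
lemma core (a : ℝ) (ha : 0 < a) (ha1 : a ≤ 1) :
    (∫ x in Icc (0:ℝ) (1/2), Real.log (deriv (f0a a) x)) +
        (∫ x in Icc (1/2:ℝ) 1, Real.log (deriv (f1a a) x)) =
      Real.log 2 - Real.log (a + 1)
        + ((a + 1) ^ 2 / (8 * a)) *
          ((1 - a) ^ 2 / (a + 1) ^ 2 * Real.log ((1 - a) ^ 2 / (a + 1) ^ 2)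
            - (1 - a) ^ 2 / (a + 1) ^ 2 + 1) := by
  have ha1' : (0:ℝ) < a + 1 := by linarith
  set c : ℝ := 8 * a / (a + 1) ^ 2 with hc_def
  have hc : c ≠ 0 := by positivity
  set G : ℝ → ℝ := fun y =>
    Real.log 2 - Real.log (a + 1) - (1 / 2) * Real.log y with hG_def
  -- the point 1/2 is a.e. avoided
  have h12 : ∀ᵐ x : ℝ ∂volume, x ≠ (1/2 : ℝ) := by
    rw [MeasureTheory.ae_iff]
    simp only [not_not, Set.setOf_eq_eq_singleton]
    exact Real.volume_singleton
  -- first integral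
  have hI1 : (∫ x in Icc (0:ℝ) (1/2), Real.log (deriv (f0a a) x))
      = ∫ x in (0:ℝ)..(1/2), G (1 - c * x) := by
    rw [MeasureTheory.integral_Icc_eq_integral_Ioc,
      intervalIntegral.integral_of_le (by norm_num : (0:ℝ) ≤ 1/2)]
    apply setIntegral_congr_ae measurableSet_Ioc
    filter_upwards [h12] with x hx12 hx
    have hx' : x < 1 / 2 := lt_of_le_of_ne hx.2 hx12
    have hu := upos a x ha ha1 hx.1.le hx'
    have harg : 1 - c * x = 1 - 8 * a * x / (a + 1) ^ 2 := by
      rw [hc_def]; ring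
    rw [log_deriv_f0a a x ha hu, hG_def, harg]
  -- second integral
  have hI2 : (∫ x in Icc (1/2:ℝ) 1, Real.log (deriv (f1a a) x))
      = ∫ x in (1/2:ℝ)..1, G (1 - c * (1 - x)) := by
    rw [MeasureTheory.integral_Icc_eq_integral_Ioc,
      intervalIntegral.integral_of_le (by norm_num : (1/2:ℝ) ≤ 1)]
    apply setIntegral_congr_ae measurableSet_Ioc
    filter_upwards with x hx
    have h1x : 0 ≤ 1 - x := by linarith [hx.2]
    have h1x' : 1 - x < 1 / 2 := by linarith [hx.1]
    have hu := upos a (1 - x) ha ha1 h1x h1x'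
    have harg : 1 - c * (1 - x) = 1 - 8 * a * (1 - x) / (a + 1) ^ 2 := by
      rw [hc_def]; ring
    rw [log_deriv_f1a a x ha hu, hG_def, harg]
  -- reflect the second integral onto [0, 1/2]
  have hrefl : (∫ x in (1/2:ℝ)..1, G (1 - c * (1 - x)))
      = ∫ x in (0:ℝ)..(1/2), G (1 - c * x) := by
    have := intervalIntegral.integral_comp_sub_left
      (a := (1/2:ℝ)) (b := 1) (fun y => G (1 - c * y)) 1
    norm_num at this
    convert this using 2
  -- substitution in the remaining integral
  set t : ℝ := (1 - a) ^ 2 / (a + 1) ^ 2 with ht_def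
  have ht0 : 0 ≤ t := by positivity
  have ht1 : t ≤ 1 := by
    rw [ht_def, div_le_one (by positivity)]
    nlinarith
  have hsub : (∫ x in (0:ℝ)..(1/2), G (1 - c * x)) = c⁻¹ * ∫ y in t..(1:ℝ), G y := by
    have h := intervalIntegral.integral_comp_sub_mul (a := (0:ℝ)) (b := 1/2) G hc 1
    have he1 : 1 - c * (1/2 : ℝ) = t := by
      rw [hc_def, ht_def]; field_simp; ring
    have he2 : 1 - c * (0:ℝ) = 1 := by ring
    rw [he1, he2] at h
    simpa [smul_eq_mul] using h
  -- compute ∫ y in t..1, G y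
  have hlogint := intervalIntegrable_log01 t ht0 ht1
  have hGint : (∫ y in t..(1:ℝ), G y)
      = (1 - t) * (Real.log 2 - Real.log (a + 1))
        - (1 / 2) * (-1 + t - t * Real.log t) := by
    rw [hG_def]
    rw [intervalIntegral.integral_sub (intervalIntegrable_const)
      (hlogint.const_mul (1/2 : ℝ))]
    rw [intervalIntegral.integral_const_mul, integral_log_t1 t ht0 ht1]
    simp [smul_eq_mul]
    ring
  -- assemble
  rw [hI1, hI2, hrefl, hsub, hGint]
  have hcinv : c⁻¹ = (a + 1) ^ 2 / (8 * a) := by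
    rw [hc_def]; field_simp
  rw [hcinv, ht_def]
  have hone : (1:ℝ) - (1 - a) ^ 2 / (a + 1) ^ 2 = 4 * a / (a + 1) ^ 2 := by
    field_simp; ring
  field_simp
  ring

end CuspAux

/-- Since `f⁽ᵃ⁾` preserves Lebesgue measure, its positive
Lyapunov exponent is `∫₀^{1/2} log f₀ᵃ' + ∫_{1/2}¹ log f₁ᵃ'`; for `0 < a < 1` it
equals `log 2 + 1/2 + ((1-a)²/(4a)) log(1-a) - ((1+a)²/(4a)) log(1+a)`, and for
`a = 1` the same integral equals `1/2`. -/
theorem cusp_map_lyapunov_exponent :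
    (∀ a : ℝ, 0 < a → a < 1 →
      (∫ x in Icc (0:ℝ) (1/2), Real.log (deriv (f0a a) x)) +
          (∫ x in Icc (1/2:ℝ) 1, Real.log (deriv (f1a a) x)) =
        Real.log 2 + 1/2 + ((1 - a) ^ 2 / (4 * a)) * Real.log (1 - a)
          - ((1 + a) ^ 2 / (4 * a)) * Real.log (1 + a)) ∧
    (∫ x in Icc (0:ℝ) (1/2), Real.log (deriv (f0a 1) x)) +
        (∫ x in Icc (1/2:ℝ) 1, Real.log (deriv (f1a 1) x)) = 1/2 := by
  constructor
  · intro a ha ha1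
    rw [CuspAux.core a ha ha1.le]
    have h1a : (0:ℝ) < 1 - a := by linarith
    have h1a' : (0:ℝ) < a + 1 := by linarith
    have hlog : Real.log ((1 - a) ^ 2 / (a + 1) ^ 2)
        = 2 * Real.log (1 - a) - 2 * Real.log (a + 1) := by
      rw [Real.log_div (by positivity) (by positivity), Real.log_pow, Real.log_pow]
      push_cast; ring
    rw [hlog]
    have hprod : (1:ℝ) + a = a + 1 := by ring
    rw [hprod]
    field_simp
    ring
  · rw [CuspAux.core 1 one_pos le_rfl]
    norm_num
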